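/- Let Λ and Λ̃ be two m×r unordered GLT matrices such that Λ̃ Λ̃ᵀ = Λ Λᵀ. Then Λ̃ = Λ P_± P_ρ for some signed permutation matrix P_± P_ρ; i.e., unordered GLT matrices are identified from their cross-covariance matrix up to signed permutations. -/

import Mathlib

open Matrix

/-- `Λ` is an unordered GLT matrix: it has full column rank `r` and pairwise
distinct pivot rows `l j` (in each column `j`, the entries strictly above the
pivot row vanish and the pivot entry is nonzero). -/
def IsUnorderedGLT {m r : ℕ} (Λ : Matrix (Fin m) (Fin r) ℝ) : Prop :=
  Λ.rank = r ∧ ∃ l : Fin r → Fin m, Function.Injective l ∧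
    ∀ j : Fin r, (∀ i : Fin m, i < l j → Λ i j = 0) ∧ Λ (l j) j ≠ 0

/-- `P` is a signed permutation matrix, i.e. a product `P_± P_ρ` of a diagonal
matrix with `±1` diagonal entries and a permutation matrix. -/
def IsSignedPerm {r : ℕ} (P : Matrix (Fin r) (Fin r) ℝ) : Prop :=
  ∃ (σ : Equiv.Perm (Fin r)) (ε : Fin r → ℝ), (∀ j, ε j = 1 ∨ ε j = -1) ∧
    ∀ i j, P i j = if σ i = j then ε i else 0

lemma glt_key : ∀ (r : ℕ) {m : ℕ} (Λ Λt : Matrix (Fin m) (Fin r) ℝ)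
    (l lt : Fin r → Fin m),
    Function.Injective l →
    (∀ j, (∀ i, i < l j → Λ i j = 0) ∧ Λ (l j) j ≠ 0) →
    Function.Injective lt →
    (∀ j, (∀ i, i < lt j → Λt i j = 0) ∧ Λt (lt j) j ≠ 0) →
    (∀ i k, ∑ j, Λt i j * Λt k j = ∑ j, Λ i j * Λ k j) →
    ∃ (τ : Equiv.Perm (Fin r)) (ε : Fin r → ℝ),
      (∀ j, ε j = 1 ∨ ε j = -1) ∧ ∀ i j, Λt i j = ε j * Λ i (τ j) := by
  intro r
  induction r with
  | zero =>
    intro m Λ Λt l lt _ _ _ _ _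
    exact ⟨1, fun j => 1, fun j => j.elim0, fun i j => j.elim0⟩
  | succ r IH =>
    intro m Λ Λt l lt hl hΛ hlt hΛt hA
    obtain ⟨j0, -, hj0⟩ := Finset.exists_min_image Finset.univ l ⟨0, Finset.mem_univ 0⟩
    obtain ⟨j0t, -, hj0t⟩ := Finset.exists_min_image Finset.univ lt ⟨0, Finset.mem_univ 0⟩
    -- the two minimal pivot rows coincide
    have h1 : ¬ (lt j0t < l j0) := by
      intro hlt0
      have hz : ∀ j, Λ (lt j0t) j = 0 :=
        fun j => (hΛ j).1 _ (lt_of_lt_of_le hlt0 (hj0 j (Finset.mem_univ j)))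
      have hzero : ∑ j, Λt (lt j0t) j * Λt (lt j0t) j = 0 := by
        rw [hA]; simp [hz]
      have := (Finset.sum_eq_zero_iff_of_nonneg
        (fun j _ => mul_self_nonneg _)).1 hzero j0t (Finset.mem_univ _)
      exact (hΛt j0t).2 (mul_self_eq_zero.mp this)
    have h2 : ¬ (l j0 < lt j0t) := by
      intro hlt0
      have hz : ∀ j, Λt (l j0) j = 0 :=
        fun j => (hΛt j).1 _ (lt_of_lt_of_le hlt0 (hj0t j (Finset.mem_univ j)))
      have hzero : ∑ j, Λ (l j0) j * Λ (l j0) j = 0 := by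
        rw [← hA]; simp [hz]
      have := (Finset.sum_eq_zero_iff_of_nonneg
        (fun j _ => mul_self_nonneg _)).1 hzero j0 (Finset.mem_univ _)
      exact (hΛ j0).2 (mul_self_eq_zero.mp this)
    have hi : l j0 = lt j0t := le_antisymm (not_lt.1 h1) (not_lt.1 h2)
    set i0 := l j0 with hi0
    -- row i0 has a single nonzero entry in each matrix
    have hrow : ∀ j, j ≠ j0 → Λ i0 j = 0 := by
      intro j hj
      refine (hΛ j).1 i0 (lt_of_le_of_ne (hj0 j (Finset.mem_univ j)) ?_)
      exact fun e => hj (hl e).symm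
    have hrowt : ∀ j, j ≠ j0t → Λt i0 j = 0 := by
      intro j hj
      rw [hi]
      refine (hΛt j).1 _ (lt_of_le_of_ne (hj0t j (Finset.mem_univ j)) ?_)
      exact fun e => hj (hlt e).symm
    have hd : Λ i0 j0 ≠ 0 := (hΛ j0).2
    have hc0 : Λt i0 j0t ≠ 0 := by rw [hi]; exact (hΛt j0t).2
    -- compare row i0 of the two Gram matrices
    have hc : ∀ i, Λ i0 j0 * Λ i j0 = Λt i0 j0t * Λt i j0t := by
      intro i
      have hthis := hA i0 i
      have s1 : ∑ j, Λ i0 j * Λ i j = Λ i0 j0 * Λ i j0 :=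
        Finset.sum_eq_single j0 (fun b _ hb => by rw [hrow b hb, zero_mul])
          (fun hb => absurd (Finset.mem_univ _) hb)
      have s2 : ∑ j, Λt i0 j * Λt i j = Λt i0 j0t * Λt i j0t :=
        Finset.sum_eq_single j0t (fun b _ hb => by rw [hrowt b hb, zero_mul])
          (fun hb => absurd (Finset.mem_univ _) hb)
      rw [s1, s2] at hthis
      exact hthis.symm
    have hsq : Λ i0 j0 * Λ i0 j0 = Λt i0 j0t * Λt i0 j0t := hc i0
    set ε0 : ℝ := Λ i0 j0 / Λt i0 j0t with hε0def
    have hε0 : ε0 * ε0 = 1 := by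
      rw [hε0def, div_mul_div_comm, ← hsq, div_self (mul_ne_zero hd hd)]
    have hcol : ∀ i, Λt i j0t = ε0 * Λ i j0 := by
      intro i
      rw [hε0def, div_mul_eq_mul_div, eq_comm, div_eq_iff hc0]
      have := hc i
      ring_nf
      ring_nf at this
      linarith
    have hterm : ∀ i k, Λt i j0t * Λt k j0t = Λ i j0 * Λ k j0 := by
      intro i k
      rw [hcol i, hcol k]
      calc ε0 * Λ i j0 * (ε0 * Λ k j0) = ε0 * ε0 * (Λ i j0 * Λ k j0) := by ring
        _ = Λ i j0 * Λ k j0 := by rw [hε0]; ring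
    -- reduced matrices
    obtain ⟨τ', ε', hε', hmain'⟩ := IH
      (Λ.submatrix id j0.succAbove) (Λt.submatrix id j0t.succAbove)
      (l ∘ j0.succAbove) (lt ∘ j0t.succAbove)
      (hl.comp (Fin.succAbove_right_injective))
      (fun j => ⟨fun i hij => (hΛ _).1 i hij, (hΛ _).2⟩)
      (hlt.comp (Fin.succAbove_right_injective))
      (fun j => ⟨fun i hij => (hΛt _).1 i hij, (hΛt _).2⟩)
      (by
        intro i k
        have e1 := Fin.sum_univ_succAbove (fun j => Λt i j * Λt k j) j0t
        have e2 := Fin.sum_univ_succAbove (fun j => Λ i j * Λ k j) j0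
        have e3 := hA i k
        have e4 := hterm i k
        simp only [submatrix_apply, id]
        rw [e1, e2] at e3
        linarith)
    -- assemble the permutation and signs
    refine ⟨(finSuccEquiv' j0t).trans ((Equiv.optionCongr τ').trans (finSuccEquiv' j0).symm),
      fun j => ((finSuccEquiv' j0t) j).elim ε0 ε', ?_, ?_⟩
    · intro j
      rcases eq_or_ne j j0t with rfl | hj
      · simp only [finSuccEquiv'_at, Option.elim]
        exact mul_self_eq_one_iff.mp hε0
      · obtain ⟨j', rfl⟩ := Fin.exists_succAbove_eq hj
        simp only [finSuccEquiv'_succAbove, Option.elim]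
        exact hε' j'
    · intro i j
      rcases eq_or_ne j j0t with rfl | hj
      · simp only [Equiv.trans_apply, finSuccEquiv'_at, Equiv.optionCongr_apply,
          Option.map_none, finSuccEquiv'_symm_none, Option.elim]
        exact hcol i
      · obtain ⟨j', rfl⟩ := Fin.exists_succAbove_eq hj
        have := hmain' i j'
        simp only [submatrix_apply, id] at this
        simp only [Equiv.trans_apply, finSuccEquiv'_succAbove, Equiv.optionCongr_apply,
          Option.map_some, finSuccEquiv'_symm_some, Option.elim]
        exact this

/-- Unordered GLT matrices are identified from their cross-covariance matrix up
to signed permutations: if `Λ̃ Λ̃ᵀ = Λ Λᵀ` for unordered GLT matrices `Λ`, `Λ̃`,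
then `Λ̃ = Λ P_± P_ρ` for some signed permutation matrix. -/
theorem unorderedGLT_identification {m r : ℕ}
    (Λ Λt : Matrix (Fin m) (Fin r) ℝ)
    (hΛ : IsUnorderedGLT Λ) (hΛt : IsUnorderedGLT Λt)
    (h : Λt * Λtᵀ = Λ * Λᵀ) :
    ∃ P : Matrix (Fin r) (Fin r) ℝ, IsSignedPerm P ∧ Λt = Λ * P := by
  obtain ⟨-, l, hl, hpiv⟩ := hΛ
  obtain ⟨-, lt, hlt, hpivt⟩ := hΛt
  have hA : ∀ i k, ∑ j, Λt i j * Λt k j = ∑ j, Λ i j * Λ k j := by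
    intro i k
    have := congrFun (congrFun h i) k
    simpa [Matrix.mul_apply, Matrix.transpose_apply] using this
  obtain ⟨τ, ε, hε, hmain⟩ := glt_key r Λ Λt l lt hl hpiv hlt hpivt hA
  refine ⟨Matrix.of fun i j => if i = τ j then ε j else 0,
    ⟨τ.symm, fun i => ε (τ.symm i), fun i => hε _, ?_⟩, ?_⟩
  · intro i j
    simp only [Matrix.of_apply]
    by_cases hij : i = τ j
    · subst hij
      simp
    · rw [if_neg hij, if_neg]
      exact fun e => hij (by rw [← e, Equiv.apply_symm_apply])
  · ext i j
    rw [Matrix.mul_apply]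
    simp only [Matrix.of_apply, mul_ite, mul_zero]
    rw [Finset.sum_ite_eq' Finset.univ (τ j) (fun k => Λ i k * ε j),
      if_pos (Finset.mem_univ _), hmain i j, mul_comm]
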